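/- arXiv:2510.19744 — 8 statements merged into one kernel-verified Lean document; each statement's English description precedes it below -/
import Mathlib

section
/- Let A be a Boolean algebra, A an element of A, and (μ_n) a sequence of bounded finitely additive signed measures on A such that sup_n ‖μ_n ↾ A‖ = ∞ (where (μ ↾ A)(B) = μ(A ∧ B) and ‖·‖ is the total variation norm). Then there exists an ultrafilter t on A containing A such that for every B ∈ t one has sup_n ‖μ_n ↾ B‖ = ∞. -/
open Filter
open scoped ENNReal

variable {α : Type*}

/-- Finite additivity of a real-valued set function on a Boolean algebra. -/
def FinAdd [BooleanAlgebra α] (μ : α → ℝ) : Prop :=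
  ∀ a b : α, a ⊓ b = ⊥ → μ (a ⊔ b) = μ a + μ b

/-- The variation of `μ` over the subfamily `s`:
`sup {|μ a| + |μ b| : a, b ∈ s, a ⊓ b = ⊥}`, computed in `ℝ≥0∞`. -/
noncomputable def svar [BooleanAlgebra α] (μ : α → ℝ) (s : Set α) : ℝ≥0∞ :=
  ⨆ p : {p : α × α // p.1 ∈ s ∧ p.2 ∈ s ∧ p.1 ⊓ p.2 = ⊥},
    ENNReal.ofReal (|μ p.1.1| + |μ p.1.2|)

/-- The variation norm of the restriction `μ ↾ a`, i.e. `|μ|(a)`. -/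
noncomputable def bvar [BooleanAlgebra α] (μ : α → ℝ) (a : α) : ℝ≥0∞ :=
  svar μ (Set.Iic a)

/-- `t` is an ultrafilter on the Boolean algebra `α`. -/
structure IsUltrafilterSet [BooleanAlgebra α] (t : Set α) : Prop where
  top_mem : ⊤ ∈ t
  bot_not_mem : ⊥ ∉ t
  mem_of_le : ∀ ⦃a b : α⦄, a ∈ t → a ≤ b → b ∈ t
  inf_mem : ∀ ⦃a b : α⦄, a ∈ t → b ∈ t → a ⊓ b ∈ t
  mem_or_compl_mem : ∀ a : α, a ∈ t ∨ aᶜ ∈ t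

lemma finAdd_bot [BooleanAlgebra α] {μ : α → ℝ} (h : FinAdd μ) : μ ⊥ = 0 := by
  have := h ⊥ ⊥ (by simp)
  simp at this
  linarith

lemma bvar_mono [BooleanAlgebra α] (μ : α → ℝ) {a b : α} (hab : a ≤ b) :
    bvar μ a ≤ bvar μ b := by
  refine iSup_le fun p => ?_
  exact le_iSup_of_le ⟨p.1, p.2.1.trans hab, p.2.2.1.trans hab, p.2.2.2⟩ le_rfl

lemma bvar_bot [BooleanAlgebra α] {μ : α → ℝ} (h : FinAdd μ) : bvar μ ⊥ = 0 := by
  refine le_antisymm (iSup_le fun p => ?_) zero_le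
  have h1 : p.1.1 = ⊥ := le_bot_iff.mp p.2.1
  have h2 : p.1.2 = ⊥ := le_bot_iff.mp p.2.2.1
  simp [h1, h2, finAdd_bot h]

lemma le_bvar [BooleanAlgebra α] (μ : α → ℝ) {a b c : α} (ha : a ≤ c) (hb : b ≤ c)
    (hab : a ⊓ b = ⊥) : ENNReal.ofReal (|μ a| + |μ b|) ≤ bvar μ c :=
  le_iSup_of_le ⟨(a, b), ha, hb, hab⟩ le_rfl

lemma bvar_subadd [BooleanAlgebra α] {μ : α → ℝ} (h : FinAdd μ) (B C : α) :
    bvar μ (B ⊔ C) ≤ bvar μ B + bvar μ C := by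
  refine iSup_le fun ⟨⟨a, b⟩, ha, hb, hab⟩ => ?_
  simp only [Set.mem_Iic] at ha hb
  have split : ∀ x : α, x ≤ B ⊔ C → μ x = μ (x ⊓ B) + μ (x ⊓ Bᶜ) := by
    intro x hx
    have hd : (x ⊓ B) ⊓ (x ⊓ Bᶜ) = ⊥ := by
      refine le_bot_iff.mp ?_
      calc (x ⊓ B) ⊓ (x ⊓ Bᶜ) ≤ B ⊓ Bᶜ := inf_le_inf inf_le_right inf_le_right
        _ = ⊥ := inf_compl_eq_bot
    have he : (x ⊓ B) ⊔ (x ⊓ Bᶜ) = x := by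
      rw [← inf_sup_left, sup_compl_eq_top, inf_top_eq]
    calc μ x = μ ((x ⊓ B) ⊔ (x ⊓ Bᶜ)) := by rw [he]
      _ = μ (x ⊓ B) + μ (x ⊓ Bᶜ) := h _ _ hd
  have hac : a ⊓ Bᶜ ≤ C := by
    calc a ⊓ Bᶜ ≤ (B ⊔ C) ⊓ Bᶜ := inf_le_inf_right _ ha
      _ = (B ⊓ Bᶜ) ⊔ (C ⊓ Bᶜ) := inf_sup_right ..
      _ ≤ C := by simp [inf_le_left]
  have hbc : b ⊓ Bᶜ ≤ C := by
    calc b ⊓ Bᶜ ≤ (B ⊔ C) ⊓ Bᶜ := inf_le_inf_right _ hb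
      _ = (B ⊓ Bᶜ) ⊔ (C ⊓ Bᶜ) := inf_sup_right ..
      _ ≤ C := by simp [inf_le_left]
  have hd1 : (a ⊓ B) ⊓ (b ⊓ B) = ⊥ := le_bot_iff.mp
    (le_trans (inf_le_inf inf_le_left inf_le_left) hab.le)
  have hd2 : (a ⊓ Bᶜ) ⊓ (b ⊓ Bᶜ) = ⊥ := le_bot_iff.mp
    (le_trans (inf_le_inf inf_le_left inf_le_left) hab.le)
  have e1 : |μ a| ≤ |μ (a ⊓ B)| + |μ (a ⊓ Bᶜ)| := by
    rw [split a ha]; exact abs_add_le _ _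
  have e2 : |μ b| ≤ |μ (b ⊓ B)| + |μ (b ⊓ Bᶜ)| := by
    rw [split b hb]; exact abs_add_le _ _
  calc ENNReal.ofReal (|μ a| + |μ b|)
      ≤ ENNReal.ofReal ((|μ (a ⊓ B)| + |μ (b ⊓ B)|) + (|μ (a ⊓ Bᶜ)| + |μ (b ⊓ Bᶜ)|)) := by
        apply ENNReal.ofReal_le_ofReal; linarith
    _ ≤ ENNReal.ofReal (|μ (a ⊓ B)| + |μ (b ⊓ B)|)
        + ENNReal.ofReal (|μ (a ⊓ Bᶜ)| + |μ (b ⊓ Bᶜ)|) := ENNReal.ofReal_add_le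
    _ ≤ bvar μ B + bvar μ C :=
        add_le_add (le_bvar μ inf_le_right inf_le_right hd1)
          (le_bvar μ hac hbc hd2)

/-- If `sup_n ‖μ_n ↾ A‖ = ∞`, then there is an ultrafilter `t` containing `A` such that
`sup_n ‖μ_n ↾ B‖ = ∞` for every `B ∈ t`. -/
theorem stmt_0 [BooleanAlgebra α] (μ : ℕ → α → ℝ)
    (hadd : ∀ n, FinAdd (μ n)) (hbdd : ∀ n, bvar (μ n) ⊤ ≠ ⊤)
    (A : α) (hA : (⨆ n, bvar (μ n) A) = ⊤) :
    ∃ t : Set α, IsUltrafilterSet t ∧ A ∈ t ∧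
      ∀ B ∈ t, (⨆ n, bvar (μ n) B) = ⊤ := by
  set S : Set α := {B | (⨆ n, bvar (μ n) B) = ⊤} with hSdef
  have hAS : A ∈ S := hA
  have hS_up : ∀ {B C : α}, B ∈ S → B ≤ C → C ∈ S := by
    intro B C hB hBC
    refine top_unique ?_
    rw [← hB]
    exact iSup_mono fun n => bvar_mono _ hBC
  have hS_split : ∀ {B C D : α}, B ∈ S → B ≤ C ⊔ D → C ∈ S ∨ D ∈ S := by
    intro B C D hB hle
    by_contra hcon
    push_neg at hcon
    have hC : (⨆ n, bvar (μ n) C) ≠ ⊤ := hcon.1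
    have hD : (⨆ n, bvar (μ n) D) ≠ ⊤ := hcon.2
    have : (⨆ n, bvar (μ n) B) ≤ (⨆ n, bvar (μ n) C) + ⨆ n, bvar (μ n) D := by
      refine iSup_le fun n => ?_
      calc bvar (μ n) B ≤ bvar (μ n) (C ⊔ D) := bvar_mono _ hle
        _ ≤ bvar (μ n) C + bvar (μ n) D := bvar_subadd (hadd n) C D
        _ ≤ _ := add_le_add (le_iSup (fun n => bvar (μ n) C) n) (le_iSup (fun n => bvar (μ n) D) n)
    rw [hB] at this
    exact (ENNReal.add_ne_top.mpr ⟨hC, hD⟩) (top_unique this)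
  have hbotS : ⊥ ∉ S := by
    have : (⨆ n, bvar (μ n) ⊥) = 0 := by
      simp [fun n => bvar_bot (hadd n)]
    intro h
    rw [hSdef] at h
    simp only [Set.mem_setOf_eq] at h
    rw [this] at h
    exact ENNReal.zero_ne_top h
  -- the collection of filters contained in S
  set F : Set (Set α) := {t | t ⊆ S ∧ (∀ ⦃a b : α⦄, a ∈ t → a ≤ b → b ∈ t) ∧
      (∀ ⦃a b : α⦄, a ∈ t → b ∈ t → a ⊓ b ∈ t)} with hFdef
  have hIci : Set.Ici A ∈ F := by
    refine ⟨fun x hx => hS_up hAS hx, fun a b ha hab => le_trans ha hab,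
      fun a b ha hb => le_inf ha hb⟩
  have hchains : ∀ c ⊆ F, IsChain (· ⊆ ·) c → c.Nonempty →
      ∃ ub ∈ F, ∀ s ∈ c, s ⊆ ub := by
    intro c hcF hchain hcne
    refine ⟨⋃₀ c, ⟨?_, ?_, ?_⟩, fun s hs => Set.subset_sUnion_of_mem hs⟩
    · rintro x ⟨t, htc, hxt⟩
      exact (hcF htc).1 hxt
    · rintro x y ⟨t, htc, hxt⟩ hxy
      exact ⟨t, htc, (hcF htc).2.1 hxt hxy⟩
    · rintro x y ⟨t, htc, hxt⟩ ⟨t', ht'c, hyt'⟩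
      rcases hchain.total htc ht'c with h | h
      · exact ⟨t', ht'c, (hcF ht'c).2.2 (h hxt) hyt'⟩
      · exact ⟨t, htc, (hcF htc).2.2 hxt (h hyt')⟩
  obtain ⟨m, hm_sub, hm⟩ := zorn_subset_nonempty F hchains (Set.Ici A) hIci
  obtain ⟨hmS, hm_up, hm_inf⟩ := hm.prop
  have htop : ⊤ ∈ m := hm_sub (le_top : A ≤ ⊤)
  have hAm : A ∈ m := hm_sub (le_refl A)
  have key : ∀ x : α, (∀ b ∈ m, b ⊓ x ∈ S) → x ∈ m := by
    intro x hx
    set m' : Set α := {y | ∃ b ∈ m, b ⊓ x ≤ y} with hm'def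
    have hm'F : m' ∈ F := by
      refine ⟨?_, ?_, ?_⟩
      · rintro y ⟨b, hb, hby⟩
        exact hS_up (hx b hb) hby
      · rintro y z ⟨b, hb, hby⟩ hyz
        exact ⟨b, hb, hby.trans hyz⟩
      · rintro y z ⟨b, hb, hby⟩ ⟨b', hb', hb'z⟩
        exact ⟨b ⊓ b', hm_inf hb hb',
          le_inf (le_trans (inf_le_inf_right x inf_le_left) hby)
            (le_trans (inf_le_inf_right x inf_le_right) hb'z)⟩
    have hmm' : m ⊆ m' := fun b hb => ⟨b, hb, inf_le_left⟩
    have : m' = m := hm.eq_of_ge hm'F hmm'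
    have hxm' : x ∈ m' := ⟨⊤, htop, by simp⟩
    rwa [← this]
  refine ⟨m, ⟨htop, fun h => hbotS (hmS h), hm_up, hm_inf, ?_⟩, hAm,
    fun B hB => hmS hB⟩
  · intro a
    by_contra hcon
    push_neg at hcon
    have h1 : ¬ ∀ b ∈ m, b ⊓ a ∈ S := fun h => hcon.1 (key a h)
    have h2 : ¬ ∀ b ∈ m, b ⊓ aᶜ ∈ S := fun h => hcon.2 (key aᶜ h)
    push_neg at h1 h2
    obtain ⟨b, hb, hbS⟩ := h1
    obtain ⟨b', hb', hb'S⟩ := h2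
    have hmem : b ⊓ b' ∈ S := hmS (hm_inf hb hb')
    have hle : b ⊓ b' ≤ (b ⊓ a) ⊔ (b' ⊓ aᶜ) := by
      have : b ⊓ b' = (b ⊓ b' ⊓ a) ⊔ (b ⊓ b' ⊓ aᶜ) := by
        rw [← inf_sup_left, sup_compl_eq_top, inf_top_eq]
      rw [this]
      exact sup_le_sup (inf_le_inf_right a inf_le_left)
        (inf_le_inf_right aᶜ inf_le_right)
    rcases hS_split hmem hle with h | h
    · exact hbS h
    · exact hb'S h
end

section
/- Let φ be a lower semicontinuous submeasure on ω with φ(ω) = ∞. Then there exists a lower semicontinuous submeasure ψ on ω with ψ(ω) = ∞ such that Fin(φ) ⊆ Exh(ψ), where Fin(φ) = {A ⊆ ω : φ(A) < ∞} and Exh(ψ) = {A ⊆ ω : lim_n ψ(A \ [0,n]) = 0}. -/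
open Filter
open scoped ENNReal

/-- `φ` is a submeasure on `ω`: vanishes on `∅`, finite on singletons, monotone,
and subadditive. -/
def IsSubmeasure (φ : Set ℕ → ℝ≥0∞) : Prop :=
  φ ∅ = 0 ∧ (∀ n : ℕ, φ {n} ≠ ⊤) ∧ (∀ ⦃A B : Set ℕ⦄, A ⊆ B → φ A ≤ φ B) ∧
    ∀ A B : Set ℕ, φ (A ∪ B) ≤ φ A + φ B

/-- Lower semicontinuity: `φ(A) = lim_n φ(A ∩ [0,n])`. -/
def IsLSC (φ : Set ℕ → ℝ≥0∞) : Prop :=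
  ∀ A : Set ℕ, φ A = ⨆ n : ℕ, φ (A ∩ Set.Iic n)

/-- `A` belongs to the exhaustive ideal `Exh(φ)`: `lim_n φ(A \ [0,n]) = 0`. -/
def ExhMem (φ : Set ℕ → ℝ≥0∞) (A : Set ℕ) : Prop :=
  Tendsto (fun n : ℕ => φ (A \ Set.Iic n)) atTop (nhds 0)

lemma aux_min_add_one_le (x y : ℝ≥0∞) : min (x + y) 1 ≤ min x 1 + min y 1 := by
  rcases le_total 1 x with h | h
  · calc min (x + y) 1 ≤ 1 := min_le_right _ _
      _ = min x 1 := (min_eq_right h).symm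
      _ ≤ min x 1 + min y 1 := le_self_add
  rcases le_total 1 y with h' | h'
  · calc min (x + y) 1 ≤ 1 := min_le_right _ _
      _ = min y 1 := (min_eq_right h').symm
      _ ≤ min x 1 + min y 1 := le_add_self
  · rw [min_eq_left h, min_eq_left h']
    exact min_le_left _ _

lemma aux_min_iSup (f : ℕ → ℝ≥0∞) : min (⨆ i, f i) 1 = ⨆ i, min (f i) 1 := by
  refine le_antisymm ?_ (iSup_le fun i => min_le_min (le_iSup f i) le_rfl)
  rcases le_total (⨆ i, f i) 1 with h | h
  · rw [min_eq_left h]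
    exact iSup_mono fun i => le_min le_rfl ((le_iSup f i).trans h)
  · rw [min_eq_right h]
    refine le_of_forall_lt fun c hc => ?_
    obtain ⟨i, hi⟩ := lt_iSup_iff.1 (hc.trans_le h)
    exact lt_of_lt_of_le (lt_min hi hc) (le_iSup (fun i => min (f i) 1) i)

lemma aux_tsum_iSup_mono {f : ℕ → ℕ → ℝ≥0∞} (hf : ∀ k, Monotone (f k)) :
    ∑' k, ⨆ m, f k m = ⨆ m, ∑' k, f k m := by
  rw [ENNReal.tsum_eq_iSup_sum]
  have h : ∀ s : Finset ℕ, (∑ k ∈ s, ⨆ m, f k m) = ⨆ m, ∑ k ∈ s, f k m :=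
    fun s => ENNReal.finsetSum_iSup_of_monotone fun a => hf a
  simp_rw [h]
  rw [iSup_comm]
  exact iSup_congr fun m => ENNReal.tsum_eq_iSup_sum.symm

/-- For every lsc submeasure `φ` on `ω` with `φ(ω) = ∞` there is an lsc submeasure `ψ`
with `ψ(ω) = ∞` and `Fin(φ) ⊆ Exh(ψ)`. -/
theorem stmt_9 (φ : Set ℕ → ℝ≥0∞) (hφ : IsSubmeasure φ) (hlsc : IsLSC φ)
    (hinf : φ Set.univ = ⊤) :
    ∃ ψ : Set ℕ → ℝ≥0∞, IsSubmeasure ψ ∧ IsLSC ψ ∧ ψ Set.univ = ⊤ ∧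
      ∀ A : Set ℕ, φ A ≠ ⊤ → ExhMem ψ A := by
  obtain ⟨hφ0, hφs, hφm, hφa⟩ := hφ
  set r : ℝ≥0∞ := 2⁻¹ with hr
  have hr1 : r < 1 := by rw [hr]; simp [ENNReal.inv_lt_one]
  have hrk1 : ∀ k : ℕ, r ^ k * 2 ^ k = 1 := by
    intro k
    rw [hr, ← mul_pow, ENNReal.inv_mul_cancel two_ne_zero ENNReal.ofNat_ne_top, one_pow]
  have hgeo : ∑' k : ℕ, r ^ k = 2 := by
    rw [ENNReal.tsum_geometric, hr, ENNReal.one_sub_inv_two, inv_inv]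
  have htop : ∀ k : ℕ, ∃ n : ℕ, (2 : ℝ≥0∞) ^ k ≤ φ (Set.Iic n) := by
    intro k
    have h := hlsc Set.univ
    rw [hinf] at h
    simp only [Set.univ_inter] at h
    have h2 : (2 : ℝ≥0∞) ^ k < ⨆ n : ℕ, φ (Set.Iic n) := by
      rw [← h]; exact ENNReal.pow_lt_top ENNReal.ofNat_lt_top
    obtain ⟨i, hi⟩ := lt_iSup_iff.1 h2
    exact ⟨i, hi.le⟩
  choose m hm using htop
  set N : ℕ → ℕ := fun k => (Finset.range (k + 1)).sup m with hN
  have hNmono : Monotone N := fun a b hab =>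
    Finset.sup_mono (Finset.range_subset_range.2 (by omega))
  have hNm : ∀ k, (2 : ℝ≥0∞) ^ k ≤ φ (Set.Iic (N k)) := by
    intro k
    refine (hm k).trans (hφm ?_)
    exact Set.Iic_subset_Iic.2 (Finset.le_sup (Finset.mem_range.2 (Nat.lt_succ_self k)))
  set g : ℕ → Set ℕ → ℝ≥0∞ := fun k A => min (r ^ k * φ (A ∩ Set.Iic (N k))) 1 with hg
  have hgmono : ∀ k, ∀ ⦃A B : Set ℕ⦄, A ⊆ B → g k A ≤ g k B := by
    intro k A B hAB
    exact min_le_min (mul_le_mul_right (hφm (Set.inter_subset_inter_left _ hAB)) _) le_rfl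
  refine ⟨fun A => ∑' k, g k A, ⟨?_, ?_, ?_, ?_⟩, ?_, ?_, ?_⟩
  · -- ψ ∅ = 0
    simp [hg, hφ0]
  · -- finite on singletons
    intro j
    show (∑' k, g k {j}) ≠ ⊤
    have hb : ∀ k, g k {j} ≤ φ {j} * r ^ k := by
      intro k
      refine (min_le_left _ _).trans ?_
      rw [mul_comm]
      exact mul_le_mul_left (hφm Set.inter_subset_left) _
    refine ne_top_of_le_ne_top ?_ (ENNReal.tsum_le_tsum hb)
    rw [ENNReal.tsum_mul_left, hgeo]
    exact ENNReal.mul_ne_top (hφs j) ENNReal.ofNat_ne_top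
  · -- monotone
    intro A B hAB
    exact ENNReal.tsum_le_tsum fun k => hgmono k hAB
  · -- subadditive
    intro A B
    show (∑' k, g k (A ∪ B)) ≤ (∑' k, g k A) + ∑' k, g k B
    have hb : ∀ k, g k (A ∪ B) ≤ g k A + g k B := by
      intro k
      have h1 : φ ((A ∪ B) ∩ Set.Iic (N k)) ≤ φ (A ∩ Set.Iic (N k)) + φ (B ∩ Set.Iic (N k)) := by
        rw [Set.union_inter_distrib_right]
        exact hφa _ _
      calc g k (A ∪ B)
          ≤ min (r ^ k * φ (A ∩ Set.Iic (N k)) + r ^ k * φ (B ∩ Set.Iic (N k))) 1 := by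
            refine min_le_min ?_ le_rfl
            rw [← mul_add]
            exact mul_le_mul_right h1 _
        _ ≤ g k A + g k B := aux_min_add_one_le _ _
    exact (ENNReal.tsum_le_tsum hb).trans_eq ENNReal.tsum_add
  · -- lsc
    intro A
    show (∑' k, g k A) = ⨆ m', ∑' k, g k (A ∩ Set.Iic m')
    have hglsc : ∀ k, g k A = ⨆ m', g k (A ∩ Set.Iic m') := by
      intro k
      have h := hlsc (A ∩ Set.Iic (N k))
      have heq : ∀ m' : ℕ, A ∩ Set.Iic (N k) ∩ Set.Iic m' = A ∩ Set.Iic m' ∩ Set.Iic (N k) := by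
        intro m'; ext x; simp only [Set.mem_inter_iff]; tauto
      simp_rw [heq] at h
      show min (r ^ k * φ (A ∩ Set.Iic (N k))) 1 = _
      rw [h, ENNReal.mul_iSup, aux_min_iSup]
    calc (∑' k, g k A) = ∑' k, ⨆ m', g k (A ∩ Set.Iic m') := tsum_congr fun k => hglsc k
      _ = ⨆ m', ∑' k, g k (A ∩ Set.Iic m') :=
          aux_tsum_iSup_mono fun k a b hab =>
            hgmono k (Set.inter_subset_inter_right _ (Set.Iic_subset_Iic.2 hab))
  · -- ψ univ = ⊤
    show (∑' k, g k Set.univ) = ⊤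
    have h1 : ∀ k, g k Set.univ = 1 := by
      intro k
      show min (r ^ k * φ (Set.univ ∩ Set.Iic (N k))) 1 = 1
      rw [Set.univ_inter]
      refine min_eq_right ?_
      calc (1 : ℝ≥0∞) = r ^ k * 2 ^ k := (hrk1 k).symm
        _ ≤ r ^ k * φ (Set.Iic (N k)) := mul_le_mul_right (hNm k) _
    rw [tsum_congr h1]
    exact ENNReal.tsum_const_eq_top_of_ne_zero one_ne_zero
  · -- exhaustive
    intro A hA
    rw [ExhMem, ENNReal.tendsto_nhds_zero]
    intro ε hε
    have htend : Tendsto (fun m' : ℕ => φ A * 2 * r ^ m') atTop (nhds 0) := by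
      have h := ENNReal.Tendsto.const_mul (a := φ A * 2)
        (ENNReal.tendsto_pow_atTop_nhds_zero_of_lt_one hr1)
        (Or.inr (ENNReal.mul_ne_top hA ENNReal.ofNat_ne_top))
      simpa using h
    obtain ⟨m₀, hm₀⟩ := (ENNReal.tendsto_nhds_zero.1 htend ε hε).exists
    filter_upwards [eventually_ge_atTop (N m₀)] with n hn
    set f : ℕ → ℝ≥0∞ := fun k => if k < m₀ then 0 else φ A * r ^ k with hf
    have hb : ∀ k, g k (A \ Set.Iic n) ≤ f k := by
      intro k
      by_cases hk : k < m₀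
      · have hempty : (A \ Set.Iic n) ∩ Set.Iic (N k) = ∅ := by
          ext x
          simp only [Set.mem_inter_iff, Set.mem_diff, Set.mem_Iic, Set.mem_empty_iff_false,
            iff_false, not_and]
          rintro ⟨_, hx⟩ hxk
          exact hx (hxk.trans ((hNmono hk.le).trans hn))
        have : g k (A \ Set.Iic n) = 0 := by
          show min (r ^ k * φ ((A \ Set.Iic n) ∩ Set.Iic (N k))) 1 = 0
          rw [hempty, hφ0, mul_zero]
          simp
        rw [this, hf]
        simp [hk]
      · rw [hf]
        simp only [if_neg hk]
        calc g k (A \ Set.Iic n)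
            ≤ r ^ k * φ ((A \ Set.Iic n) ∩ Set.Iic (N k)) := min_le_left _ _
          _ ≤ r ^ k * φ A :=
              mul_le_mul_right (hφm (Set.inter_subset_left.trans Set.diff_subset)) _
          _ = φ A * r ^ k := mul_comm _ _
    calc (∑' k, g k (A \ Set.Iic n)) ≤ ∑' k, f k := ENNReal.tsum_le_tsum hb
      _ = ∑ k ∈ Finset.range m₀, f k + ∑' k, f (k + m₀) :=
          (Summable.sum_add_tsum_nat_add' (f := f) (k := m₀) ENNReal.summable).symm
      _ = ∑' k, φ A * r ^ m₀ * r ^ k := by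
          rw [Finset.sum_eq_zero fun k hk => by simp [hf, Finset.mem_range.1 hk], zero_add]
          refine tsum_congr fun k => ?_
          rw [hf]
          simp only [if_neg (by omega : ¬ k + m₀ < m₀)]
          rw [pow_add]
          ring
      _ = φ A * 2 * r ^ m₀ := by
          rw [ENNReal.tsum_mul_left, hgeo]
          ring
      _ ≤ ε := hm₀
end

section
/- Let φ be a lower semicontinuous submeasure on ω with φ(ω) = ∞, and let (P_n) be a ⪯-decreasing sequence of finite partitions of ω (P_{n+1} refines P_n). Then there exist a ⊆-decreasing sequence (A_n) with A_n ∈ P_n and a sequence (F_n) of pairwise disjoint finite subsets of ω such that F_n ⊆ A_n and φ(F_n) ≥ n+1 for every n. -/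
open Filter
open scoped ENNReal

/-- `P` is a finite partition of `ω` (into nonempty pieces). -/
def IsFinPartition (P : Finset (Set ℕ)) : Prop :=
  (⋃₀ (P : Set (Set ℕ))) = Set.univ ∧
  (∀ A ∈ P, ∀ B ∈ P, A ≠ B → A ∩ B = ∅) ∧ ∀ A ∈ P, A ≠ ∅

/-- `P' ⪯ P`: every member of `P'` is contained in or disjoint from each member of `P`. -/
def Refines (P' P : Finset (Set ℕ)) : Prop :=
  ∀ A ∈ P, ∀ B ∈ P', B ⊆ A ∨ A ∩ B = ∅
lemma aux_biUnion_le {φ : Set ℕ → ℝ≥0∞} (hφ : IsSubmeasure φ) {ι : Type*}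
    (s : Finset ι) (f : ι → Set ℕ) : φ (⋃ i ∈ s, f i) ≤ ∑ i ∈ s, φ (f i) := by
  classical
  induction s using Finset.induction with
  | empty => simp [hφ.1]
  | insert _ _ h ih =>
      rw [Finset.set_biUnion_insert, Finset.sum_insert h]
      exact le_trans (hφ.2.2.2 _ _) (add_le_add le_rfl ih)

lemma aux_finite_ne_top {φ : Set ℕ → ℝ≥0∞} (hφ : IsSubmeasure φ) {F : Set ℕ}
    (hF : F.Finite) : φ F ≠ ⊤ := by
  classical
  have h1 : F = ⋃ n ∈ hF.toFinset, ({n} : Set ℕ) := by ext x; simp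
  have h2 := aux_biUnion_le hφ hF.toFinset (fun n => ({n} : Set ℕ))
  rw [← h1] at h2
  intro h
  rw [h] at h2
  exact (ENNReal.sum_lt_top.2 (fun i _ => lt_top_iff_ne_top.2 (hφ.2.1 i))).ne (top_le_iff.1 h2)


/-- For an lsc submeasure `φ` with `φ(ω) = ∞` and a `⪯`-decreasing sequence `(P_n)` of
finite partitions of `ω`, there are a `⊆`-decreasing selection `(A_n ∈ P_n)` and pairwise
disjoint finite sets `F_n ⊆ A_n` with `φ(F_n) ≥ n + 1`. -/
theorem stmt_10 (φ : Set ℕ → ℝ≥0∞) (hφ : IsSubmeasure φ) (hlsc : IsLSC φ)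
    (hinf : φ Set.univ = ⊤)
    (P : ℕ → Finset (Set ℕ)) (hpart : ∀ n, IsFinPartition (P n))
    (href : ∀ n, Refines (P (n + 1)) (P n)) :
    ∃ (A : ℕ → Set ℕ) (F : ℕ → Set ℕ),
      (∀ n, A n ∈ P n) ∧ (∀ n, A (n + 1) ⊆ A n) ∧
      (∀ n, (F n).Finite) ∧ (∀ m n, m ≠ n → F m ∩ F n = ∅) ∧
      (∀ n, F n ⊆ A n) ∧ ∀ n : ℕ, (n + 1 : ℝ≥0∞) ≤ φ (F n) := by
  classical
  have hmono := hφ.2.2.1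
  -- base: some piece of P 0 has infinite measure
  have hbase : ∃ B, B ∈ P 0 ∧ φ B = ⊤ := by
    have hcover : (Set.univ : Set ℕ) = ⋃ B ∈ P 0, B := by
      rw [← (hpart 0).1, Set.sUnion_eq_biUnion]; rfl
    have hle : φ Set.univ ≤ ∑ B ∈ P 0, φ B := by
      rw [hcover]; exact aux_biUnion_le hφ _ _
    by_contra hall
    push_neg at hall
    have hne : ∑ B ∈ P 0, φ B ≠ ⊤ :=
      (ENNReal.sum_lt_top.2 (fun B hB => lt_top_iff_ne_top.2 (hall B hB))).ne
    exact hne (top_le_iff.1 (hinf ▸ hle))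
  -- step: refine an infinite-measure piece
  have hstep : ∀ n (S : Set ℕ), S ∈ P n → φ S = ⊤ →
      ∃ C, C ∈ P (n+1) ∧ φ C = ⊤ ∧ C ⊆ S := by
    intro n S hS hStop
    have hcover : S = ⋃ B ∈ P (n+1), S ∩ B := by
      ext x
      simp only [Set.mem_iUnion, Set.mem_inter_iff, exists_prop]
      constructor
      · intro hx
        have hx' : x ∈ ⋃₀ ((P (n+1) : Set (Set ℕ))) := by rw [(hpart (n+1)).1]; trivial
        obtain ⟨B, hB, hxB⟩ := hx'
        exact ⟨B, hB, hx, hxB⟩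
      · rintro ⟨B, _, hx, _⟩; exact hx
    have hle : φ S ≤ ∑ B ∈ P (n+1), φ (S ∩ B) := by
      calc φ S = φ (⋃ B ∈ P (n+1), S ∩ B) := by rw [← hcover]
        _ ≤ _ := aux_biUnion_le hφ _ _
    have hex : ∃ B ∈ P (n+1), φ (S ∩ B) = ⊤ := by
      by_contra hall
      push_neg at hall
      have hne : ∑ B ∈ P (n+1), φ (S ∩ B) ≠ ⊤ :=
        (ENNReal.sum_lt_top.2 (fun B hB => lt_top_iff_ne_top.2 (hall B hB))).ne
      exact hne (top_le_iff.1 (hStop ▸ hle))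
    obtain ⟨B, hB, hSB⟩ := hex
    have hBtop : φ B = ⊤ := top_le_iff.1 (hSB ▸ hmono Set.inter_subset_right)
    have hne : S ∩ B ≠ ∅ := fun h => by simp [h, hφ.1] at hSB
    rcases href n S hS B hB with h | h
    · exact ⟨B, hB, hBtop, h⟩
    · exact absurd h hne
  -- the decreasing chain A
  let chain : ∀ n, {B : Set ℕ // B ∈ P n ∧ φ B = ⊤} := fun n =>
    Nat.rec ⟨hbase.choose, hbase.choose_spec⟩
      (fun n prev => ⟨(hstep n prev.1 prev.2.1 prev.2.2).choose,
        (hstep n prev.1 prev.2.1 prev.2.2).choose_spec.1,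
        (hstep n prev.1 prev.2.1 prev.2.2).choose_spec.2.1⟩) n
  let A : ℕ → Set ℕ := fun n => (chain n).1
  have hAmem : ∀ n, A n ∈ P n := fun n => (chain n).2.1
  have hAtop : ∀ n, φ (A n) = ⊤ := fun n => (chain n).2.2
  have hAsub : ∀ n, A (n+1) ⊆ A n := fun n =>
    (hstep n (chain n).1 (chain n).2.1 (chain n).2.2).choose_spec.2.2
  -- extracting heavy finite pieces
  have hgrow : ∀ (n t : ℕ), ∃ k, ((n : ℝ≥0∞) + 1) ≤ φ (A n ∩ Set.Ioc t k) := by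
    intro n t
    have hfin : φ (A n ∩ Set.Iic t) ≠ ⊤ :=
      aux_finite_ne_top hφ ((Set.finite_Iic t).inter_of_right _)
    have hdiff : φ (A n \ Set.Iic t) = ⊤ := by
      by_contra hd
      have hle : φ (A n) ≤ φ (A n ∩ Set.Iic t) + φ (A n \ Set.Iic t) := by
        refine le_trans (hmono ?_) (hφ.2.2.2 _ _)
        intro x hx
        by_cases hxt : x ≤ t
        · exact Or.inl ⟨hx, hxt⟩
        · exact Or.inr ⟨hx, hxt⟩
      rw [hAtop n] at hle
      exact ENNReal.add_ne_top.2 ⟨hfin, hd⟩ (top_le_iff.1 hle)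
    have hsup : (⨆ k, φ ((A n \ Set.Iic t) ∩ Set.Iic k)) = ⊤ := by
      rw [← hlsc _]; exact hdiff
    have hlt : ((n : ℝ≥0∞) + 1) < ⨆ k, φ ((A n \ Set.Iic t) ∩ Set.Iic k) := by
      rw [hsup]
      exact lt_top_iff_ne_top.2 (by simp)
    obtain ⟨k, hk⟩ := lt_iSup_iff.1 hlt
    refine ⟨k, le_of_lt (lt_of_lt_of_le hk (hmono ?_))⟩
    rintro x ⟨⟨hxA, hxt⟩, hxk⟩
    simp only [Set.mem_Iic] at hxt hxk
    exact ⟨hxA, by omega, hxk⟩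
  -- the thresholds
  let t : ℕ → ℕ := fun n => Nat.rec 0 (fun n tn => max tn (hgrow n tn).choose) n
  let F : ℕ → Set ℕ := fun n => A n ∩ Set.Ioc (t n) ((hgrow n (t n)).choose)
  have htmono : ∀ n, t n ≤ t (n+1) := fun n => le_max_left _ _
  have ht_le : ∀ ⦃m n⦄, m ≤ n → t m ≤ t n := fun m n h => monotone_nat_of_le_succ htmono h
  have hFsub2 : ∀ n, F n ⊆ Set.Ioc (t n) (t (n+1)) := fun n x hx =>
    ⟨hx.2.1, le_trans hx.2.2 (le_max_right _ _)⟩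
  have hdisj : ∀ m n, m < n → F m ∩ F n = ∅ := by
    intro m n hmn
    ext x
    simp only [Set.mem_inter_iff, Set.mem_empty_iff_false, iff_false, not_and]
    intro hxm hxn
    have h1 : x ≤ t (m+1) := (hFsub2 m hxm).2
    have h2 : t n < x := (hFsub2 n hxn).1
    have h3 : t (m+1) ≤ t n := ht_le hmn
    omega
  refine ⟨A, F, hAmem, hAsub, fun n => (Set.finite_Ioc _ _).inter_of_right _, ?_,
    fun n => Set.inter_subset_left, ?_⟩
  · intro m n hmn
    rcases lt_or_gt_of_ne hmn with h | h
    · exact hdisj m n h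
    · rw [Set.inter_comm]; exact hdisj n m h
  · intro n
    exact (hgrow n (t n)).choose_spec
end

section
/- Every non-atomic ideal I on ω has the Local-to-Global Boundedness Property for submeasures: whenever φ is a lower semicontinuous submeasure on ω with I ⊆ Fin(φ) = {A : φ(A) < ∞}, then φ(ω) < ∞. -/
open Filter
open scoped ENNReal

/-- `I` is an ideal on `ω` containing all finite sets. -/
def IsIdeal (I : Set (Set ℕ)) : Prop :=
  (∀ A : Set ℕ, A.Finite → A ∈ I) ∧ (∀ ⦃A B : Set ℕ⦄, B ∈ I → A ⊆ B → A ∈ I) ∧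
    ∀ ⦃A B : Set ℕ⦄, A ∈ I → B ∈ I → A ∪ B ∈ I
/-- `I` is non-atomic: there is a `⪯`-decreasing sequence of finite partitions of `ω`
such that every set almost contained in some `⊆`-decreasing selection lies in `I`. -/
def NonAtomicIdeal (I : Set (Set ℕ)) : Prop :=
  ∃ P : ℕ → Finset (Set ℕ), (∀ n, IsFinPartition (P n)) ∧
    (∀ n, Refines (P (n + 1)) (P n)) ∧
    ∀ A : ℕ → Set ℕ, (∀ n, A n ∈ P n) → (∀ n, A (n + 1) ⊆ A n) →
      ∀ E : Set ℕ, (∀ n, (E \ A n).Finite) → E ∈ I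

lemma submeasure_sUnion_le {φ : Set ℕ → ℝ≥0∞} (hφ : IsSubmeasure φ)
    (s : Finset (Set ℕ)) : φ (⋃₀ (s : Set (Set ℕ))) ≤ ∑ A ∈ s, φ A := by
  classical
  induction s using Finset.induction with
  | empty => simp [hφ.1]
  | @insert a s h ih =>
    rw [Finset.coe_insert, Set.sUnion_insert, Finset.sum_insert h]
    exact le_trans (hφ.2.2.2 _ _) (add_le_add le_rfl ih)

lemma exists_top_mem {φ : Set ℕ → ℝ≥0∞} (hφ : IsSubmeasure φ)
    (s : Finset (Set ℕ)) (h : φ (⋃₀ (s : Set (Set ℕ))) = ⊤) :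
    ∃ A ∈ s, φ A = ⊤ := by
  by_contra hc
  push_neg at hc
  have hsum : ∑ A ∈ s, φ A < ⊤ := ENNReal.sum_lt_top.2 fun A hA => lt_top_iff_ne_top.2 (hc A hA)
  have := submeasure_sUnion_le hφ s
  rw [h] at this
  exact absurd (lt_of_le_of_lt this hsum) (lt_irrefl _)


/-- Every non-atomic ideal on `ω` has the Local-to-Global Boundedness Property for
submeasures: if `φ` is an lsc submeasure with `I ⊆ Fin(φ)`, then `φ(ω) < ∞`. -/
theorem stmt_11 (I : Set (Set ℕ)) (hI : IsIdeal I) (hna : NonAtomicIdeal I) :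
    ∀ φ : Set ℕ → ℝ≥0∞, IsSubmeasure φ → IsLSC φ →
      (∀ A ∈ I, φ A ≠ ⊤) → φ Set.univ ≠ ⊤ := by
  classical
  intro φ hφ hlsc hfin htop
  obtain ⟨P, hP, href, hsel⟩ := hna
  -- step lemma
  have key : ∀ n (S : Set ℕ), S ∈ P n → φ S = ⊤ →
      ∃ T, T ∈ P (n + 1) ∧ T ⊆ S ∧ φ T = ⊤ := by
    intro n S hS hST
    set s : Finset (Set ℕ) := (P (n+1)).filter (fun T => T ⊆ S) with hs
    have hcov : S ⊆ ⋃₀ (s : Set (Set ℕ)) := by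
      intro x hx
      have hx' : x ∈ ⋃₀ ((P (n+1) : Set (Set ℕ))) := by
        rw [(hP (n+1)).1]; trivial
      obtain ⟨T, hT, hxT⟩ := hx'
      rcases href n S hS T hT with hsub | hdis
      · exact ⟨T, by simp only [hs, Finset.coe_filter, Set.mem_setOf_eq]; exact ⟨Finset.mem_coe.1 hT, hsub⟩, hxT⟩
      · exact absurd (Set.mem_inter hx hxT) (by rw [hdis]; exact fun h => h)
    have : φ (⋃₀ (s : Set (Set ℕ))) = ⊤ :=
      top_le_iff.1 (hST ▸ hφ.2.2.1 hcov)
    obtain ⟨T, hT, hTtop⟩ := exists_top_mem hφ s this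
    rw [hs, Finset.mem_filter] at hT
    exact ⟨T, hT.1, hT.2, hTtop⟩
  -- base
  have base : ∃ S, S ∈ P 0 ∧ φ S = ⊤ := by
    have : φ (⋃₀ ((P 0 : Set (Set ℕ)))) = ⊤ := by rw [(hP 0).1]; exact htop
    obtain ⟨S, hS, h⟩ := exists_top_mem hφ (P 0) this
    exact ⟨S, hS, h⟩
  -- recursive construction
  let f : ∀ n, {S : Set ℕ // S ∈ P n ∧ φ S = ⊤} := fun n =>
    Nat.rec ⟨base.choose, base.choose_spec⟩
      (fun n p =>
        ⟨(key n p.1 p.2.1 p.2.2).choose,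
         (key n p.1 p.2.1 p.2.2).choose_spec.1,
         (key n p.1 p.2.1 p.2.2).choose_spec.2.2⟩) n
  set A : ℕ → Set ℕ := fun n => (f n).1 with hA
  have hAmem : ∀ n, A n ∈ P n := fun n => (f n).2.1
  have hAtop : ∀ n, φ (A n) = ⊤ := fun n => (f n).2.2
  have hAsub : ∀ n, A (n + 1) ⊆ A n := fun n =>
    (key n (f n).1 (f n).2.1 (f n).2.2).choose_spec.2.1
  have hAanti : ∀ {m n : ℕ}, n ≤ m → A m ⊆ A n := by
    intro m n h
    induction m with
    | zero => rw [Nat.le_zero.1 h]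
    | succ m ih =>
      rcases Nat.lt_or_ge n (m+1) with h' | h'
      · exact (hAsub m).trans (ih (Nat.lt_succ_iff.1 h'))
      · rw [Nat.le_antisymm h h']
  -- pick finite pieces of large measure
  have pick : ∀ n : ℕ, ∃ k : ℕ, (n : ℝ≥0∞) < φ (A n ∩ Set.Iic k) := by
    intro n
    have := hlsc (A n)
    rw [hAtop n] at this
    have : (n : ℝ≥0∞) < ⨆ k : ℕ, φ (A n ∩ Set.Iic k) := by
      rw [← this]; exact ENNReal.natCast_lt_top n
    exact lt_iSup_iff.1 this
  choose k hk using pick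
  set F : ℕ → Set ℕ := fun n => A n ∩ Set.Iic (k n) with hF
  set E : Set ℕ := ⋃ n, F n with hE
  have hEI : E ∈ I := by
    apply hsel A hAmem hAsub
    intro n
    have hsubset : E \ A n ⊆ ⋃ m ∈ Finset.range n, F m := by
      intro x hx
      obtain ⟨hxE, hxn⟩ := hx
      rw [hE, Set.mem_iUnion] at hxE
      obtain ⟨m, hm⟩ := hxE
      simp only [Set.mem_iUnion]
      rcases Nat.lt_or_ge m n with h' | h'
      · exact ⟨m, Finset.mem_range.2 h', hm⟩
      · exact absurd (hAanti h' hm.1) hxn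
    apply Set.Finite.subset _ hsubset
    apply Set.Finite.biUnion (Finset.finite_toSet _)
    intro m _
    exact (Set.finite_Iic (k m)).subset (Set.inter_subset_right)
  have hEtop : φ E = ⊤ := by
    have hle : ∀ n : ℕ, (n : ℝ≥0∞) ≤ φ E := fun n =>
      le_trans (hk n).le (hφ.2.2.1 (Set.subset_iUnion F n))
    by_contra hne
    obtain ⟨n, hn⟩ := ENNReal.exists_nat_gt hne
    exact absurd (hle n) (not_le.2 hn)
  exact hfin E hEI hEtop
end

section
/- Let φ be a density submeasure on ω with φ(ω) = ∞, i.e. φ = sup_n μ_n for a sequence (μ_n) of finitely supported non-negative measures on ω with pairwise disjoint supports. Then there exist a finitely additive non-negative real-valued set function ρ on the ideal Exh(φ) and a sequence (A_k) of pairwise disjoint finite subsets of ω such that ρ(A_k) > k for every k. -/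
open Filter
open scoped ENNReal

/-- For a density submeasure `φ = sup_n μ_n` on `ω` (where the `μ_n` are given by the
weight functions `w n` with pairwise disjoint finite supports) with `φ(ω) = ∞`, there exist
a finitely additive non-negative set function `ρ` on `Exh(φ)` and pairwise disjoint finite
sets `A_k` with `ρ(A_k) > k`. -/
theorem stmt_13 (w : ℕ → ℕ → ℝ≥0∞)
    (hfin : ∀ n k, w n k ≠ ⊤)
    (hsupfin : ∀ n, (Function.support (w n)).Finite)
    (hdisj : ∀ m n, m ≠ n → Function.support (w m) ∩ Function.support (w n) = ∅)
    (φ : Set ℕ → ℝ≥0∞) (hφ : ∀ A : Set ℕ, φ A = ⨆ n, ∑' k : A, w n k)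
    (hinf : φ Set.univ = ⊤) :
    ∃ ρ : Set ℕ → ℝ,
      (∀ A : Set ℕ, ExhMem φ A → 0 ≤ ρ A) ∧
      (∀ A B : Set ℕ, ExhMem φ A → ExhMem φ B → A ∩ B = ∅ → ρ (A ∪ B) = ρ A + ρ B) ∧
      ∃ A : ℕ → Set ℕ, (∀ k, (A k).Finite) ∧ (∀ k j, k ≠ j → A k ∩ A j = ∅) ∧
        ∀ k : ℕ, (k : ℝ) < ρ (A k) := by
  classical
  set T : ℕ → ℝ≥0∞ := fun n => ∑' k, w n k with hTdef
  have hTfin : ∀ n, T n ≠ ⊤ := by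
    intro n
    have h1 : T n = ∑ k ∈ (hsupfin n).toFinset, w n k := by
      refine tsum_eq_sum ?_
      intro k hk
      by_contra h
      exact hk ((hsupfin n).mem_toFinset.mpr h)
    rw [h1]
    exact (ENNReal.sum_lt_top.mpr fun k _ => (hfin n k).lt_top).ne
  have hsupT : (⨆ n, T n) = ⊤ := by
    have h := hφ Set.univ
    rw [hinf] at h
    simp only [tsum_univ] at h
    exact h.symm
  have hsel : ∀ c : ℝ≥0∞, c ≠ ⊤ → ∀ N : ℕ, ∃ m, N < m ∧ c < T m := by
    intro c hc N
    by_contra h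
    push_neg at h
    have hb : (⨆ n, T n) ≤ c ⊔ (Finset.Iic N).sup T := by
      refine iSup_le fun n => ?_
      rcases le_or_gt n N with hn | hn
      · exact le_sup_of_le_right (Finset.le_sup (Finset.mem_Iic.mpr hn))
      · exact le_sup_of_le_left (h n hn)
    rw [hsupT, top_le_iff] at hb
    have hlt : c ⊔ (Finset.Iic N).sup T < ⊤ :=
      sup_lt_iff.mpr ⟨hc.lt_top, (Finset.sup_lt_iff (by simp)).mpr fun i _ => (hTfin i).lt_top⟩
    exact hlt.ne hb
  -- choose indices with large mass
  set c : ℕ → ℝ≥0∞ := fun k => ((k : ℝ≥0∞) + 1) * 2 ^ k with hcdef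
  have hcne : ∀ k, c k ≠ ⊤ := by
    intro k
    exact ENNReal.mul_ne_top (by simp) (by simp [ENNReal.pow_ne_top])
  have hc0 : ∀ k, c k ≠ 0 := by
    intro k
    simp [hcdef]
  have hstep : ∀ k N : ℕ, ∃ m, N < m ∧ c k < T m := fun k N => hsel (c k) (hcne k) N
  choose F hF1 hF2 using hstep
  let g : ℕ → ℕ := fun k => Nat.rec (F 0 0) (fun k ih => F (k + 1) ih) k
  have hgsucc : ∀ k, g (k + 1) = F (k + 1) (g k) := fun k => rfl
  have hgmono : StrictMono g := strictMono_nat_of_lt_succ fun k => hF1 (k + 1) (g k)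
  have hgT : ∀ k, c k < T (g k) := by
    intro k
    cases k with
    | zero => exact hF2 0 0
    | succ k => exact hF2 (k + 1) (g k)
  set M : ℕ → ℝ≥0∞ := fun k => T (g k) with hMdef
  have hMtop : ∀ k, M k ≠ ⊤ := fun k => hTfin (g k)
  have hM0 : ∀ k, M k ≠ 0 := by
    intro k
    exact (lt_of_le_of_lt (zero_le (a := c k)) (hgT k)).ne'
  set μ : ℕ → Set ℕ → ℝ≥0∞ := fun k S => ∑' i : S, w (g k) i with hμdef
  have hμle : ∀ k S, μ k S ≤ M k := by
    intro k S
    rw [hμdef]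
    calc (∑' i : S, w (g k) i) = ∑' i, S.indicator (w (g k)) i := tsum_subtype S (w (g k))
      _ ≤ ∑' i, w (g k) i := ENNReal.tsum_le_tsum fun i => Set.indicator_le_self S _ i
  have hμφ : ∀ k S, μ k S ≤ φ S := by
    intro k S
    rw [hφ S]
    exact le_iSup (fun n => ∑' i : S, w n i) (g k)
  have hμtop : ∀ k S, μ k S ≠ ⊤ := fun k S => ((hμle k S).trans_lt (hMtop k).lt_top).ne
  set α : ℕ → ℝ≥0∞ := fun k => ((k : ℝ≥0∞) + 1) / M k with hαdef
  have hαtop : ∀ k, α k ≠ ⊤ := fun k => (ENNReal.div_lt_top (by simp) (hM0 k)).ne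
  have hαle : ∀ k, α k ≤ 2⁻¹ ^ k := by
    intro k
    have h1 : α k ≤ ((k : ℝ≥0∞) + 1) / c k := ENNReal.div_le_div_left (hgT k).le _
    refine h1.trans_eq ?_
    rw [hcdef]
    rw [show ((k : ℝ≥0∞) + 1) / (((k : ℝ≥0∞) + 1) * 2 ^ k)
        = ((k : ℝ≥0∞) + 1) * 1 / (((k : ℝ≥0∞) + 1) * 2 ^ k) by rw [mul_one],
      ENNReal.mul_div_mul_left _ _ (by simp) (by simp), one_div, ← ENNReal.inv_pow]
  set ν : Set ℕ → ℝ≥0∞ := fun S => ∑' k, α k * μ k S with hνdef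
  -- additivity of ν
  have hνadd : ∀ A B : Set ℕ, A ∩ B = ∅ → ν (A ∪ B) = ν A + ν B := by
    intro A B hAB
    have hd : Disjoint A B := Set.disjoint_iff_inter_eq_empty.mpr hAB
    have hsplit : ∀ k, μ k (A ∪ B) = μ k A + μ k B := by
      intro k
      exact Summable.tsum_union_disjoint hd ENNReal.summable ENNReal.summable
    rw [hνdef]
    simp only [hsplit, mul_add]
    rw [ENNReal.tsum_add]
  -- finiteness of ν on Exh
  have hνfin : ∀ S : Set ℕ, ExhMem φ S → ν S ≠ ⊤ := by
    intro S hS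
    rw [ExhMem] at hS
    obtain ⟨m, hm⟩ := (hS.eventually_lt_const (by norm_num : (0 : ℝ≥0∞) < 1)).exists
    have hd : Disjoint (S ∩ Set.Iic m) (S \ Set.Iic m) := by
      rw [Set.disjoint_left]
      rintro i ⟨_, hi2⟩ ⟨_, hi4⟩
      exact hi4 hi2
    have hμS : ∀ k, μ k S = μ k (S ∩ Set.Iic m) + μ k (S \ Set.Iic m) := by
      intro k
      rw [hμdef]
      have : S = (S ∩ Set.Iic m) ∪ (S \ Set.Iic m) := by
        rw [Set.inter_union_diff]
      conv_lhs => rw [this]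
      exact Summable.tsum_union_disjoint hd ENNReal.summable ENNReal.summable
    have hK : {k | μ k (S ∩ Set.Iic m) ≠ 0}.Finite := by
      have hsub : {k | μ k (S ∩ Set.Iic m) ≠ 0} ⊆
          ⋃ i ∈ Set.Iic m, {k | i ∈ Function.support (w (g k))} := by
        intro k hk
        have : ∃ i : (S ∩ Set.Iic m : Set ℕ), w (g k) i ≠ 0 := by
          by_contra h
          push_neg at h
          exact hk (ENNReal.tsum_eq_zero.mpr h)
        obtain ⟨⟨i, hi⟩, hwi⟩ := this
        exact Set.mem_biUnion hi.2 hwi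
      refine Set.Finite.subset (Set.Finite.biUnion (Set.finite_Iic m) fun i _ => ?_) hsub
      refine Set.Subsingleton.finite ?_
      intro k hk k' hk'
      by_contra hne
      have := hdisj (g k) (g k') (fun h => hne (hgmono.injective h))
      have : i ∈ Function.support (w (g k)) ∩ Function.support (w (g k')) := ⟨hk, hk'⟩
      rw [hdisj (g k) (g k') (fun h => hne (hgmono.injective h))] at this
      exact this
    have h1 : (∑' k, α k * μ k (S ∩ Set.Iic m)) ≠ ⊤ := by
      rw [tsum_eq_sum (s := hK.toFinset) (by
        intro k hk
        rw [Set.Finite.mem_toFinset] at hk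
        simp only [Set.mem_setOf_eq, not_not] at hk
        rw [hk, mul_zero])]
      exact (ENNReal.sum_lt_top.mpr fun k _ =>
        (ENNReal.mul_lt_top (hαtop k).lt_top (hμtop k _).lt_top)).ne
    have h2 : (∑' k, α k * μ k (S \ Set.Iic m)) ≠ ⊤ := by
      have hb : ∀ k, α k * μ k (S \ Set.Iic m) ≤ 2⁻¹ ^ k := by
        intro k
        calc α k * μ k (S \ Set.Iic m) ≤ 2⁻¹ ^ k * 1 :=
              mul_le_mul' (hαle k) (((hμφ k _).trans hm.le))
          _ = 2⁻¹ ^ k := mul_one _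
      have := (ENNReal.tsum_le_tsum hb).trans_eq (ENNReal.tsum_geometric 2⁻¹)
      refine (this.trans_lt ?_).ne
      rw [ENNReal.one_sub_inv_two]
      simp [ENNReal.inv_lt_top]
    have : ν S = (∑' k, α k * μ k (S ∩ Set.Iic m)) + ∑' k, α k * μ k (S \ Set.Iic m) := by
      rw [hνdef]
      simp only [hμS, mul_add]
      rw [ENNReal.tsum_add]
    rw [this]
    exact ENNReal.add_ne_top.mpr ⟨h1, h2⟩
  -- the witness sets
  set A : ℕ → Set ℕ := fun k => Function.support (w (g k)) with hAdef
  have hAfin : ∀ k, (A k).Finite := fun k => hsupfin (g k)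
  have hAdisj : ∀ k j, k ≠ j → A k ∩ A j = ∅ := fun k j hkj =>
    hdisj (g k) (g j) fun h => hkj (hgmono.injective h)
  have hνA : ∀ k, ν (A k) = (k : ℝ≥0∞) + 1 := by
    intro k
    have hzero : ∀ j, j ≠ k → α j * μ j (A k) = 0 := by
      intro j hj
      have : μ j (A k) = 0 := by
        rw [hμdef]
        refine ENNReal.tsum_eq_zero.mpr ?_
        rintro ⟨i, hi⟩
        by_contra h
        have hmem : i ∈ Function.support (w (g j)) ∩ Function.support (w (g k)) := ⟨h, hi⟩
        rw [hdisj (g j) (g k) (fun h' => hj (hgmono.injective h'))] at hmem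
        exact hmem
      rw [this, mul_zero]
    show (∑' j, α j * μ j (A k)) = (k : ℝ≥0∞) + 1
    rw [tsum_eq_single k hzero]
    have hμA : μ k (A k) = M k := by
      rw [hμdef, hMdef]
      exact tsum_subtype_support (w (g k))
    rw [hμA, hαdef]
    exact ENNReal.div_mul_cancel (hM0 k) (hMtop k)
  -- conclude
  refine ⟨fun S => (ν S).toReal, fun S _ => ENNReal.toReal_nonneg, ?_, A, hAfin, hAdisj, ?_⟩
  · intro X Y hX hY hXY
    show (ν (X ∪ Y)).toReal = (ν X).toReal + (ν Y).toReal
    rw [hνadd X Y hXY]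
    exact ENNReal.toReal_add (hνfin X hX) (hνfin Y hY)
  · intro k
    show (k : ℝ) < (ν (A k)).toReal
    rw [hνA k]
    rw [show ((k : ℝ≥0∞) + 1) = ((k + 1 : ℕ) : ℝ≥0∞) by push_cast; ring]
    rw [ENNReal.toReal_natCast]
    push_cast
    linarith
end

section
/- For every density submeasure φ on ω with φ(ω) = ∞, the ideal Exh(φ) is contained in a summable ideal: there exists f : ω → [0,∞) with Σ_n f(n) = ∞ such that Σ_{n ∈ A} f(n) < ∞ for every A ∈ Exh(φ). -/
open Filter
open scoped ENNReal

/-- For every density submeasure `φ = sup_n μ_n` on `ω` with `φ(ω) = ∞`, the ideal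
`Exh(φ)` is contained in a summable ideal: there is `f : ω → [0,∞)` with `Σ_n f(n) = ∞`
and `Σ_{n∈A} f(n) < ∞` for every `A ∈ Exh(φ)`. -/
theorem stmt_14 (w : ℕ → ℕ → ℝ≥0∞)
    (hfin : ∀ n k, w n k ≠ ⊤)
    (hsupfin : ∀ n, (Function.support (w n)).Finite)
    (hdisj : ∀ m n, m ≠ n → Function.support (w m) ∩ Function.support (w n) = ∅)
    (φ : Set ℕ → ℝ≥0∞) (hφ : ∀ A : Set ℕ, φ A = ⨆ n, ∑' k : A, w n k)
    (hinf : φ Set.univ = ⊤) :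
    ∃ f : ℕ → ℝ, (∀ n, 0 ≤ f n) ∧ ¬ Summable f ∧
      ∀ A : Set ℕ, ExhMem φ A → Summable (A.indicator f) := by
  classical
  have hzero : ∀ {m m' k : ℕ}, m ≠ m' → w m' k ≠ 0 → w m k = 0 := by
    intro m m' k hne h'
    by_contra h
    have hk : k ∈ Function.support (w m) ∩ Function.support (w m') := ⟨h, h'⟩
    rw [hdisj m m' hne] at hk
    exact hk
  have hφ' : ∀ A : Set ℕ, φ A = ⨆ m, ∑' k, A.indicator (w m) k := by
    intro A
    rw [hφ A]
    exact iSup_congr fun m => tsum_subtype A (w m)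
  have hTfin : ∀ m, (∑' k, w m k) ≠ ⊤ := by
    intro m
    have h1 : (∑' k, w m k) = ∑ k ∈ (hsupfin m).toFinset, w m k := by
      refine tsum_eq_sum ?_
      intro k hk
      by_contra hk0
      exact hk ((hsupfin m).mem_toFinset.2 hk0)
    rw [h1]
    exact (ENNReal.sum_lt_top.2 fun k _ => lt_top_iff_ne_top.2 (hfin m k)).ne
  have hTop : ⨆ m, ∑' k, w m k = ⊤ := by
    have h0 := hφ' Set.univ
    rw [hinf] at h0
    simpa [Set.indicator_univ] using h0.symm
  have hsel : ∀ j : ℕ, ∃ m, (2 : ℝ≥0∞) ^ j < ∑' k, w m k := by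
    intro j
    exact iSup_eq_top.1 hTop _ (ENNReal.pow_lt_top (a := 2) (n := j) (by norm_num))
  choose n hn using hsel
  set c : ℕ → ℝ≥0∞ := fun j => ∑' k, w (n j) k with hcdef
  have hc0 : ∀ j, c j ≠ 0 := fun j =>
    (lt_of_le_of_lt zero_le (hn j)).ne'
  have hctop : ∀ j, c j ≠ ⊤ := fun j => hTfin (n j)
  have hc2 : ∀ j, (2 : ℝ≥0∞) ^ j ≤ c j := fun j => (hn j).le
  set g : ℕ → ℝ≥0∞ := fun k => ∑' j, w (n j) k / c j with hgdef
  -- the pointwise supremum of the `w m` is finite, by disjointness of supports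
  have hCfin : ∀ k, (⨆ m, w m k) ≠ ⊤ := by
    intro k
    by_cases h : ∃ m₀, w m₀ k ≠ 0
    · obtain ⟨m₀, hm₀⟩ := h
      have hle : (⨆ m, w m k) ≤ w m₀ k := by
        refine iSup_le fun m => ?_
        by_cases hm : m = m₀
        · subst hm; exact le_rfl
        · rw [hzero hm hm₀]; exact zero_le
      exact fun ht => hfin m₀ k (top_le_iff.1 (ht ▸ hle))
    · push_neg at h
      simp [h]
  have hgeo : (∑' j : ℕ, ((2 : ℝ≥0∞)⁻¹) ^ j) ≠ ⊤ := by
    rw [ENNReal.tsum_geometric, ENNReal.one_sub_inv_two]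
    simp
  have hgfin : ∀ k, g k ≠ ⊤ := by
    intro k
    have hle : g k ≤ (⨆ m, w m k) * ∑' j : ℕ, ((2 : ℝ≥0∞)⁻¹) ^ j := by
      rw [← ENNReal.tsum_mul_left]
      refine ENNReal.tsum_le_tsum fun j => ?_
      calc w (n j) k / c j ≤ (⨆ m, w m k) / 2 ^ j :=
            ENNReal.div_le_div (le_iSup (fun m => w m k) (n j)) (hc2 j)
        _ = (⨆ m, w m k) * (2 : ℝ≥0∞)⁻¹ ^ j := by
            rw [div_eq_mul_inv, ENNReal.inv_pow]
    exact ne_top_of_le_ne_top (ENNReal.mul_ne_top (hCfin k) hgeo) hle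
  have hkey : ∀ A : Set ℕ,
      (∑' k, A.indicator g k) = ∑' j, (∑' k, A.indicator (w (n j)) k) / c j := by
    intro A
    have h1 : ∀ k, A.indicator g k = ∑' j, (A.indicator (w (n j)) k) / c j := by
      intro k
      by_cases hk : k ∈ A
      · simp [Set.indicator_of_mem hk, hgdef]
      · simp [Set.indicator_of_notMem hk, ENNReal.zero_div]
    calc (∑' k, A.indicator g k)
        = ∑' k, ∑' j, (A.indicator (w (n j)) k) / c j := tsum_congr h1
      _ = ∑' j, ∑' k, (A.indicator (w (n j)) k) / c j := ENNReal.tsum_comm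
      _ = ∑' j, (∑' k, A.indicator (w (n j)) k) / c j := by
          refine tsum_congr fun j => ?_
          simp only [div_eq_mul_inv]
          exact ENNReal.tsum_mul_right
  have hdivtop : (∑' k, g k) = ⊤ := by
    have h0 := hkey Set.univ
    simp only [Set.indicator_univ] at h0
    rw [h0]
    have h1 : ∀ j : ℕ, (∑' k, w (n j) k) / c j = 1 := fun j =>
      ENNReal.div_self (hc0 j) (hctop j)
    rw [tsum_congr h1]
    exact ENNReal.tsum_const_eq_top_of_ne_zero one_ne_zero
  refine ⟨fun k => (g k).toReal, fun k => ENNReal.toReal_nonneg, ?_, ?_⟩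
  · intro hs
    have hs' : Summable fun k => ((g k).toNNReal : ℝ) := by
      simpa [ENNReal.toReal] using hs
    have h2 := ENNReal.tsum_coe_ne_top_iff_summable.2 (NNReal.summable_coe.1 hs')
    rw [tsum_congr (fun k => ENNReal.coe_toNNReal (hgfin k))] at h2
    exact h2 hdivtop
  · intro A hA
    -- pick M with φ (A \ Iic M) ≤ 1
    obtain ⟨M, hM⟩ : ∃ M : ℕ, φ (A \ Set.Iic M) ≤ 1 := by
      have h1 : ∀ᶠ N in atTop, φ (A \ Set.Iic N) < 1 :=
        hA.eventually_lt_const (by norm_num)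
      obtain ⟨M, hM⟩ := h1.exists
      exact ⟨M, hM.le⟩
    -- the set of "bad" indices whose support meets [0, M] is finite
    have hBadfin : {m : ℕ | (Function.support (w m) ∩ Set.Iic M).Nonempty}.Finite := by
      have hsub : {m : ℕ | (Function.support (w m) ∩ Set.Iic M).Nonempty} ⊆
          ⋃ k ∈ Set.Iic M, {m : ℕ | w m k ≠ 0} := by
        rintro m ⟨k, hk1, hk2⟩
        exact Set.mem_biUnion hk2 hk1
      refine Set.Finite.subset (Set.Finite.biUnion (Set.finite_Iic M) fun k _ => ?_) hsub
      refine Set.Subsingleton.finite fun m1 h1 m2 h2 => ?_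
      by_contra hne
      exact h1 (hzero hne h2)
    obtain ⟨N, hN⟩ : ∃ N : ℕ, ∀ m ∈ {m : ℕ | (Function.support (w m) ∩ Set.Iic M).Nonempty},
        (∑' k, w m k) < 2 ^ N := by
      have hsup : hBadfin.toFinset.sup (fun m => ∑' k, w m k) < ⊤ :=
        Finset.sup_lt_iff (by simp) |>.2 fun m _ => lt_top_iff_ne_top.2 (hTfin m)
      obtain ⟨N, hN⟩ := ENNReal.exists_nat_gt hsup.ne
      refine ⟨N, fun m hm => ?_⟩
      have h1 : (∑' k, w m k) ≤ hBadfin.toFinset.sup (fun m => ∑' k, w m k) :=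
        Finset.le_sup (f := fun m => ∑' k, w m k) (hBadfin.mem_toFinset.2 hm)
      have h2 : ((N : ℕ) : ℝ≥0∞) ≤ 2 ^ N := by
        calc ((N : ℕ) : ℝ≥0∞) ≤ ((2 ^ N : ℕ) : ℝ≥0∞) := Nat.cast_le.2 Nat.lt_two_pow_self.le
          _ = 2 ^ N := by push_cast; ring
      exact lt_of_le_of_lt h1 (lt_of_lt_of_le hN h2)
    have hgood : ∀ j, N ≤ j → ¬ (Function.support (w (n j)) ∩ Set.Iic M).Nonempty := by
      intro j hj hbad
      have h1 := hN _ hbad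
      have h2 : (2 : ℝ≥0∞) ^ N ≤ 2 ^ j := pow_le_pow_right₀ one_le_two hj
      exact absurd (hn j) (not_lt.2 ((h1.trans_le h2).le))
    have hAle : ∀ j, N ≤ j → (∑' k, A.indicator (w (n j)) k) ≤ 1 := by
      intro j hj
      have hsupp : ∀ k, k ≤ M → w (n j) k = 0 := by
        intro k hk
        by_contra hk0
        exact hgood j hj ⟨k, hk0, hk⟩
      have hle : ∀ k, A.indicator (w (n j)) k ≤ (A \ Set.Iic M).indicator (w (n j)) k := by
        intro k
        by_cases hkA : k ∈ A
        · by_cases hkM : k ≤ M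
          · simp [Set.indicator_of_mem hkA, hsupp k hkM]
          · have hk' : k ∈ A \ Set.Iic M := ⟨hkA, by simpa using hkM⟩
            simp [Set.indicator_of_mem hkA, Set.indicator_of_mem hk']
        · simp [Set.indicator_of_notMem hkA]
      calc (∑' k, A.indicator (w (n j)) k)
          ≤ ∑' k, (A \ Set.Iic M).indicator (w (n j)) k := ENNReal.tsum_le_tsum hle
        _ ≤ ⨆ m, ∑' k, (A \ Set.Iic M).indicator (w m) k :=
            le_iSup (fun m => ∑' k, (A \ Set.Iic M).indicator (w m) k) (n j)
        _ = φ (A \ Set.Iic M) := (hφ' _).symm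
        _ ≤ 1 := hM
    have hA_le_c : ∀ j, (∑' k, A.indicator (w (n j)) k) ≤ c j := fun j =>
      ENNReal.tsum_le_tsum fun k => Set.indicator_le_self A (w (n j)) k
    have hbound : ∀ j, (∑' k, A.indicator (w (n j)) k) / c j
        ≤ (if j < N then (1 : ℝ≥0∞) else 0) + (2 : ℝ≥0∞)⁻¹ ^ j := by
      intro j
      by_cases hj : j < N
      · simp only [if_pos hj]
        have h1 : (∑' k, A.indicator (w (n j)) k) / c j ≤ c j / c j :=
          ENNReal.div_le_div (hA_le_c j) le_rfl
        rw [ENNReal.div_self (hc0 j) (hctop j)] at h1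
        exact h1.trans le_self_add
      · simp only [if_neg hj, zero_add]
        have h1 : (∑' k, A.indicator (w (n j)) k) / c j ≤ 1 / 2 ^ j :=
          ENNReal.div_le_div (hAle j (not_lt.1 hj)) (hc2 j)
        rwa [one_div, ENNReal.inv_pow] at h1
    have hfinA : (∑' k, A.indicator g k) ≠ ⊤ := by
      rw [hkey A]
      refine ne_top_of_le_ne_top ?_ (ENNReal.tsum_le_tsum hbound)
      rw [ENNReal.tsum_add]
      refine ENNReal.add_ne_top.2 ⟨?_, hgeo⟩
      have h1 : (∑' j : ℕ, (if j < N then (1 : ℝ≥0∞) else 0))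
          = ∑ j ∈ Finset.range N, (if j < N then (1 : ℝ≥0∞) else 0) :=
        tsum_eq_sum fun j hj => if_neg (by simpa using hj)
      rw [h1]
      refine (ENNReal.sum_lt_top.2 fun j _ => ?_).ne
      split <;> simp
    have heq : A.indicator (fun k => (g k).toReal) = fun k => (A.indicator g k).toReal := by
      funext k
      by_cases hk : k ∈ A
      · simp [Set.indicator_of_mem hk]
      · simp [Set.indicator_of_notMem hk]
    rw [heq]
    exact ENNReal.summable_toReal hfinA
end

section
/- Every ideal I on ω with the Positive Summability Property is tall: for every infinite A ⊆ ω there is an infinite B ∈ I with B ⊆ A. -/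
open Filter

lemma not_summable_indicator_one_of_infinite {A : Set ℕ} (hA : A.Infinite) :
    ¬ Summable (A.indicator (1 : ℕ → ℝ)) := by
  intro h
  have h0 := h.tendsto_cofinite_zero
  have h1 : ∀ᶠ n in cofinite, A.indicator (1 : ℕ → ℝ) n < 1/2 :=
    h0.eventually (eventually_lt_nhds (by norm_num))
  rw [Filter.eventually_cofinite] at h1
  refine hA.mono (fun n hn => ?_) h1
  simp [Set.indicator_of_mem hn]
  norm_num

/-- Every ideal on `ω` with the Positive Summability Property is tall: every infinite
`A ⊆ ω` contains an infinite member of `I`. -/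
theorem stmt_16 (I : Set (Set ℕ)) (hI : IsIdeal I)
    (hPSP : ∀ x : ℕ → ℝ, (∀ n, 0 ≤ x n) →
      (∀ A ∈ I, Summable (Set.indicator A x)) → Summable x) :
    ∀ A : Set ℕ, A.Infinite → ∃ B ∈ I, B.Infinite ∧ B ⊆ A := by
  intro A hA
  set x : ℕ → ℝ := A.indicator 1 with hx
  have hxnn : ∀ n, 0 ≤ x n := fun n => Set.indicator_nonneg (fun _ _ => zero_le_one) n
  have hnotsum : ¬ Summable x := not_summable_indicator_one_of_infinite hA
  have : ¬ ∀ A' ∈ I, Summable (Set.indicator A' x) := fun h => hnotsum (hPSP x hxnn h)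
  push_neg at this
  obtain ⟨A', hA'I, hA'⟩ := this
  refine ⟨A' ∩ A, hI.2.1 hA'I Set.inter_subset_left, ?_, Set.inter_subset_right⟩
  by_contra hfin
  rw [Set.not_infinite] at hfin
  apply hA'
  have heq : Set.indicator A' x = Set.indicator (A' ∩ A) (1 : ℕ → ℝ) := by
    funext n
    by_cases h1 : n ∈ A' <;> by_cases h2 : n ∈ A <;>
      simp [hx, Set.indicator, h1, h2]
  rw [heq]
  exact summable_of_finite_support (hfin.subset (Set.support_indicator_subset))
end

section
/- An ideal I on ω has the Positive Summability Property if and only if it has the Absolute Summability Property: for every sequence (x_n) of reals, if the series Σ_{n∈A} x_n converges for every A ∈ I, then Σ_n |x_n| < ∞. -/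
open Filter

/-- The series `Σ_{n∈A} x_n` converges (in the sense of partial sums). -/
def SeriesConvOn (A : Set ℕ) (x : ℕ → ℝ) : Prop :=
  ∃ L : ℝ, Tendsto (fun N => ∑ n ∈ Finset.range N, Set.indicator A x n) atTop (nhds L)

lemma summable_of_conv_nonneg {f : ℕ → ℝ} (hf : ∀ n, 0 ≤ f n)
    (h : ∃ L, Tendsto (fun N => ∑ n ∈ Finset.range N, f n) atTop (nhds L)) : Summable f := by
  obtain ⟨L, hL⟩ := h
  exact ((hasSum_iff_tendsto_nat_of_nonneg hf L).mpr hL).summable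

/-- An ideal on `ω` has the Positive Summability Property if and only if it has the
Absolute Summability Property. -/
theorem stmt_17 (I : Set (Set ℕ)) (hI : IsIdeal I) :
    (∀ x : ℕ → ℝ, (∀ n, 0 ≤ x n) →
        (∀ A ∈ I, Summable (Set.indicator A x)) → Summable x) ↔
    (∀ x : ℕ → ℝ, (∀ A ∈ I, SeriesConvOn A x) → Summable (fun n => |x n|)) := by
  obtain ⟨hfin, hdown, hunion⟩ := hI
  constructor
  · -- PSP → ASP
    intro PSP x hx
    set xp : ℕ → ℝ := fun n => max (x n) 0 with hxp
    set xm : ℕ → ℝ := fun n => max (-x n) 0 with hxm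
    have hxpnn : ∀ n, 0 ≤ xp n := fun n => le_max_right _ _
    have hxmnn : ∀ n, 0 ≤ xm n := fun n => le_max_right _ _
    have hsp : Summable xp := by
      apply PSP xp hxpnn
      intro A hA
      have hAP : A ∩ {n | 0 ≤ x n} ∈ I := hdown hA Set.inter_subset_left
      have heq : Set.indicator A xp = Set.indicator (A ∩ {n | 0 ≤ x n}) x := by
        funext n
        by_cases hnA : n ∈ A
        · by_cases hnP : 0 ≤ x n
          · rw [Set.indicator_of_mem hnA, Set.indicator_of_mem (Set.mem_inter hnA hnP)]
            exact max_eq_left hnP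
          · rw [Set.indicator_of_mem hnA,
              Set.indicator_of_notMem (fun h => hnP h.2)]
            exact max_eq_right (le_of_lt (not_le.mp hnP))
        · rw [Set.indicator_of_notMem hnA,
            Set.indicator_of_notMem (fun h => hnA h.1)]
      rw [heq]
      apply summable_of_conv_nonneg
      · intro n
        by_cases hn : n ∈ A ∩ {n | 0 ≤ x n}
        · rw [Set.indicator_of_mem hn]; exact hn.2
        · rw [Set.indicator_of_notMem hn]
      · exact hx _ hAP
    have hsm : Summable xm := by
      apply PSP xm hxmnn
      intro A hA
      have hAN : A ∩ {n | x n ≤ 0} ∈ I := hdown hA Set.inter_subset_left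
      have heq : Set.indicator A xm = fun n => - Set.indicator (A ∩ {n | x n ≤ 0}) x n := by
        funext n
        by_cases hnA : n ∈ A
        · by_cases hnP : x n ≤ 0
          · rw [Set.indicator_of_mem hnA, Set.indicator_of_mem (Set.mem_inter hnA hnP)]
            exact max_eq_left (neg_nonneg.mpr hnP)
          · rw [Set.indicator_of_mem hnA,
              Set.indicator_of_notMem (fun h => hnP h.2)]
            rw [neg_zero]; exact max_eq_right (neg_nonpos.mpr (le_of_lt (not_le.mp hnP)))
        · rw [Set.indicator_of_notMem hnA,
            Set.indicator_of_notMem (fun h => hnA h.1)]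
          simp
      rw [heq]
      apply summable_of_conv_nonneg
      · intro n
        by_cases hn : n ∈ A ∩ {n | x n ≤ 0}
        · simp only [Set.indicator_of_mem hn]; exact neg_nonneg.mpr hn.2
        · simp [Set.indicator_of_notMem hn]
      · obtain ⟨L, hL⟩ := hx _ hAN
        refine ⟨-L, ?_⟩
        have := hL.neg
        convert this using 1
        funext N
        simp [Finset.sum_neg_distrib]
      -- done
    have : Summable (fun n => xp n + xm n) := hsp.add hsm
    apply this.congr
    intro n
    simp only [hxp, hxm]
    rw [max_zero_add_max_neg_zero_eq_abs_self]
  · -- ASP → PSP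
    intro ASP x hx hsum
    have := ASP x (fun A hA => by
      obtain hs := hsum A hA
      exact ⟨_, hs.hasSum.tendsto_sum_nat⟩)
    exact this.congr fun n => abs_of_nonneg (hx n)
end
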